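/- Let n ∈ ℕ. (1) If S is a pseudo-symmetric numerical semigroup and A ⊆ {x ∈ S : F(S)/2 < x < F(S)} is a set of cardinality n such that S∖A is a numerical semigroup, then l(S∖A) = 2n + 1. (2) Conversely, for every numerical semigroup T with l(T) = 2n + 1 there exist a pseudo-symmetric numerical semigroup S with F(S) = F(T) and a set A ⊆ {x ∈ S : F(S)/2 < x < F(S)} of cardinality n such that T = S∖A. -/

import Mathlib

def IsNumericalSemigroup (S : Set ℕ) : Prop :=
  0 ∈ S ∧ (∀ a ∈ S, ∀ b ∈ S, a + b ∈ S) ∧ Sᶜ.Finite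

noncomputable def frobNS (S : Set ℕ) : ℤ :=
  sSup (insert (-1) ((fun n : ℕ => (n : ℤ)) '' Sᶜ))

def toZNS (S : Set ℕ) : Set ℤ := {z : ℤ | ∃ n ∈ S, (n : ℤ) = z}

noncomputable def genusNS (S : Set ℕ) : ℕ := Sᶜ.ncard

def smallNS (S : Set ℕ) : Set ℕ := {s ∈ S | (s : ℤ) < frobNS S}

noncomputable def nNS (S : Set ℕ) : ℕ := (smallNS S).ncard

def LgapsNS (S : Set ℕ) : Set ℕ :=
  {x : ℕ | x ∉ S ∧ frobNS S - (x : ℤ) ∉ toZNS (smallNS S)}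

noncomputable def lNS (S : Set ℕ) : ℕ := (LgapsNS S).ncard

noncomputable def hNS (S : Set ℕ) : ℕ := sSup (LgapsNS S)

def PFNS (S : Set ℕ) : Set ℤ :=
  {x : ℤ | x ∉ toZNS S ∧ ∀ s ∈ S, s ≠ 0 → x + (s : ℤ) ∈ toZNS S}

noncomputable def typeNS (S : Set ℕ) : ℕ := (PFNS S).ncard

def msgNS (S : Set ℕ) : Set ℕ :=
  {x : ℕ | x ∈ S ∧ x ≠ 0 ∧ ∀ a ∈ S, ∀ b ∈ S, a ≠ 0 → b ≠ 0 → a + b ≠ x}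

noncomputable def multNS (S : Set ℕ) : ℕ := sInf (S \ {0})

def IsIrreducibleNS (S : Set ℕ) : Prop :=
  IsNumericalSemigroup S ∧
    ¬ ∃ T₁ T₂ : Set ℕ, IsNumericalSemigroup T₁ ∧ IsNumericalSemigroup T₂ ∧
        S ⊂ T₁ ∧ S ⊂ T₂ ∧ S = T₁ ∩ T₂

def IsSymmetricNS (S : Set ℕ) : Prop := IsIrreducibleNS S ∧ Odd (frobNS S)

def IsPseudoSymmetricNS (S : Set ℕ) : Prop := IsIrreducibleNS S ∧ Even (frobNS S)

def genNS (A : Set ℕ) : Set ℕ := (AddSubmonoid.closure A : Set ℕ)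

def IsURSYNS (S : Set ℕ) : Prop :=
  ∃ T : Set ℕ, ∃ x : ℕ, IsSymmetricNS T ∧ x ∈ msgNS T ∧ S = T \ {x}

def IsURPSYNS (S : Set ℕ) : Prop :=
  ∃ T : Set ℕ, ∃ x : ℕ, IsPseudoSymmetricNS T ∧ x ∈ msgNS T ∧ S = T \ {x}

def deltaNS (S : Set ℕ) : Set ℕ := {s ∈ S | 2 * (s : ℤ) < frobNS S}

def thetaNS (S : Set ℕ) : Set ℕ :=
  genNS (deltaNS S) ∪ {n : ℕ | frobNS S < (n : ℤ)}

noncomputable def CNS (F : ℕ) : Set ℕ :=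
  if Odd F then (({0} : Set ℕ) ∪ {n : ℕ | (F + 1) / 2 ≤ n}) \ {F}
  else (({0} : Set ℕ) ∪ {n : ℕ | F / 2 + 1 ≤ n}) \ {F}

def SymCond (S : Set ℕ) (f : ℕ) : Prop := ∀ x, x ∉ S → 2 * x ≠ f → f - x ∈ S

lemma frob_eq {S : Set ℕ} {f : ℕ} (hfS : f ∉ S) (hmax : ∀ x, x ∉ S → x ≤ f) :
    frobNS S = (f : ℤ) := by
  have hbdd : BddAbove (insert (-1 : ℤ) ((fun n : ℕ => (n : ℤ)) '' Sᶜ)) := by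
    refine ⟨(f : ℤ), ?_⟩
    rintro z (rfl | ⟨x, hx, rfl⟩)
    · omega
    · simpa using hmax x hx
  apply le_antisymm
  · apply csSup_le ⟨-1, by simp⟩
    rintro z (rfl | ⟨x, hx, rfl⟩)
    · omega
    · simpa using hmax x hx
  · exact le_csSup hbdd (Or.inr ⟨f, hfS, rfl⟩)

lemma frob_of_compl_empty {S : Set ℕ} (h : Sᶜ = ∅) : frobNS S = -1 := by
  rw [frobNS, h]
  simp

lemma mem_L_iff {S : Set ℕ} {f : ℕ} (h0 : 0 ∈ S) (hfS : f ∉ S)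
    (hmax : ∀ x, x ∉ S → x ≤ f) (x : ℕ) :
    x ∈ LgapsNS S ↔ x ∉ S ∧ f - x ∉ S := by
  have hfrob := frob_eq hfS hmax
  constructor
  · rintro ⟨hxS, hx2⟩
    refine ⟨hxS, fun hfx => hx2 ?_⟩
    have hx1 : 1 ≤ x := Nat.one_le_iff_ne_zero.mpr (fun h => hxS (h ▸ h0))
    have hxf : x ≤ f := hmax x hxS
    have hf1 : 1 ≤ f := le_trans hx1 hxf
    refine ⟨f - x, ⟨hfx, ?_⟩, ?_⟩
    · rw [hfrob]
      exact_mod_cast Nat.sub_lt hf1 hx1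
    · rw [hfrob]
      push_cast [Nat.cast_sub hxf]
      ring
  · rintro ⟨hxS, hfx⟩
    refine ⟨hxS, ?_⟩
    rintro ⟨y, ⟨hyS, _⟩, hy⟩
    have hxf : x ≤ f := hmax x hxS
    have : (y : ℤ) = ((f - x : ℕ) : ℤ) := by
      rw [hy, hfrob, Nat.cast_sub hxf]
    have : y = f - x := by exact_mod_cast this
    exact hfx (this ▸ hyS)

lemma get_frob {S : Set ℕ} (hfin : Sᶜ.Finite) (hne : Sᶜ.Nonempty) :
    ∃ f : ℕ, f ∉ S ∧ ∀ x, x ∉ S → x ≤ f := by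
  obtain ⟨f, hf, hfmax⟩ := Set.Finite.exists_maximalFor id Sᶜ hfin hne
  simp only [id_eq] at hfmax
  refine ⟨f, hf, fun x hx => ?_⟩
  by_contra hc
  have := hfmax hx (by omega)
  omega

lemma irred_of_symcond {S : Set ℕ} {f : ℕ} (hS : IsNumericalSemigroup S) (hfS : f ∉ S)
    (hmax : ∀ x, x ∉ S → x ≤ f) (hsym : SymCond S f) : IsIrreducibleNS S := by
  refine ⟨hS, ?_⟩
  rintro ⟨T₁, T₂, h₁, h₂, hsub1, hsub2, heq⟩
  have key : ∀ T : Set ℕ, IsNumericalSemigroup T → S ⊂ T → f ∉ T → False := by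
    intro T hT hsub hfT
    obtain ⟨x, hxT, hxS⟩ := Set.exists_of_ssubset hsub
    have hxf : x ≤ f := hmax x hxS
    by_cases h2 : 2 * x = f
    · have := hT.2.1 x hxT x hxT
      exact hfT (by rwa [show x + x = f by omega] at this)
    · have hfx : f - x ∈ S := hsym x hxS h2
      have : x + (f - x) ∈ T := hT.2.1 x hxT (f - x) (hsub.1 hfx)
      rw [show x + (f - x) = f by omega] at this
      exact hfT this
  have hfS' : f ∉ T₁ ∩ T₂ := heq ▸ hfS
  rcases (by tauto : f ∉ T₁ ∨ f ∉ T₂) with h | h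
  · exact key T₁ h₁ hsub1 h
  · exact key T₂ h₂ hsub2 h

lemma symcond_of_psym {S : Set ℕ} {f : ℕ} (hS : IsPseudoSymmetricNS S) (hfS : f ∉ S)
    (hmax : ∀ x, x ∉ S → x ≤ f) : SymCond S f := by
  obtain ⟨⟨hns, hirr⟩, _⟩ := hS
  have h0 : 0 ∈ S := hns.1
  have hgt : ∀ y, f < y → y ∈ S := fun y hy => by
    by_contra hc; exact absurd (hmax y hc) (by omega)
  by_contra hcon
  unfold SymCond at hcon
  push_neg at hcon
  set G : Set ℕ := {x | x ∉ S ∧ 2 * x ≠ f ∧ f - x ∉ S} with hGdef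
  have hGne : G.Nonempty := by
    obtain ⟨x, hx1, hx2, hx3⟩ := hcon
    exact ⟨x, hx1, hx2, hx3⟩
  have hGfin : G.Finite := hns.2.2.subset (fun x hx => hx.1)
  obtain ⟨h, hhG, hhmax⟩ := Set.Finite.exists_maximalFor id G hGfin hGne
  simp only [id_eq] at hhmax
  have hmax' : ∀ x ∈ G, x ≤ h := by
    intro x hx
    by_contra hc
    exact absurd (hhmax hx (by omega)) (by omega)
  obtain ⟨hhS, hh2, hhfS⟩ := hhG
  have hhf : h ≤ f := hmax h hhS
  have hh1 : 1 ≤ h := Nat.pos_of_ne_zero (fun he => hhS (he ▸ h0))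
  have hhne : h ≠ f := fun he => hhfS (by rw [he]; simpa using h0)
  have hfhG : f - h ∈ G := ⟨hhfS, by omega, by rw [show f - (f - h) = h by omega]; exact hhS⟩
  have h2f : f < 2 * h := by
    have := hmax' _ hfhG
    omega
  have hT₁ : IsNumericalSemigroup (insert h S) := by
    refine ⟨Or.inr h0, ?_, hns.2.2.subset (fun x hx => by
      simp only [Set.mem_compl_iff, Set.mem_insert_iff, not_or] at hx ⊢; exact hx.2)⟩
    have hadd : ∀ b ∈ S, h + b ∈ insert h S := by
      intro b hbS
      rcases Nat.eq_zero_or_pos b with rfl | hb1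
      · simp
      by_cases hbig : f < h + b
      · exact Or.inr (hgt _ hbig)
      by_cases hcS : h + b ∈ S
      · exact Or.inr hcS
      · exfalso
        have hbf : h + b ≠ f := by
          intro he
          exact hhfS (by rw [show f - h = b by omega]; exact hbS)
        have hG2 : h + b ∈ G := by
          refine ⟨hcS, by omega, fun hy => ?_⟩
          have : f - (h + b) + b ∈ S := hns.2.1 _ hy _ hbS
          rw [show f - (h + b) + b = f - h by omega] at this
          exact hhfS this
        have := hmax' _ hG2
        omega
    rintro a (rfl | haS) b (rfl | hbS)
    · exact Or.inr (hgt _ (by omega))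
    · exact hadd b hbS
    · rw [add_comm]; exact hadd a haS
    · exact Or.inr (hns.2.1 a haS b hbS)
  have hT₂ : IsNumericalSemigroup (insert f S) := by
    refine ⟨Or.inr h0, ?_, hns.2.2.subset (fun x hx => by
      simp only [Set.mem_compl_iff, Set.mem_insert_iff, not_or] at hx ⊢; exact hx.2)⟩
    have hadd : ∀ b ∈ S, f + b ∈ insert f S := by
      intro b hbS
      rcases Nat.eq_zero_or_pos b with rfl | hb1
      · simp
      · exact Or.inr (hgt _ (by omega))
    rintro a (rfl | haS) b (rfl | hbS)
    · exact Or.inr (hgt _ (by omega))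
    · exact hadd b hbS
    · rw [add_comm]; exact hadd a haS
    · exact Or.inr (hns.2.1 a haS b hbS)
  apply hirr
  refine ⟨insert h S, insert f S, hT₁, hT₂,
    ⟨Set.subset_insert _ _, fun hc => hhS (hc (Set.mem_insert h S))⟩,
    ⟨Set.subset_insert _ _, fun hc => hfS (hc (Set.mem_insert f S))⟩, ?_⟩
  ext x
  simp only [Set.mem_inter_iff, Set.mem_insert_iff]
  constructor
  · intro hx; exact ⟨Or.inr hx, Or.inr hx⟩
  · rintro ⟨rfl | hx, h2⟩
    · rcases h2 with he | hx
      · omega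
      · exact hx
    · exact hx

lemma part2 (n : ℕ) (T : Set ℕ) (hT : IsNumericalSemigroup T) (hlT : lNS T = 2 * n + 1) :
    ∃ S A : Set ℕ, IsPseudoSymmetricNS S ∧ frobNS S = frobNS T ∧
      A ⊆ {x ∈ S | frobNS S < 2 * (x : ℤ) ∧ (x : ℤ) < frobNS S} ∧
      A.ncard = n ∧ T = S \ A := by
  have h0 : 0 ∈ T := hT.1
  have hne : Tᶜ.Nonempty := by
    rcases Set.eq_empty_or_nonempty Tᶜ with he | h
    · exfalso
      have hemp : LgapsNS T = ∅ := by
        apply Set.eq_empty_iff_forall_notMem.mpr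
        intro x hx
        have hxc : x ∈ Tᶜ := hx.1
        rw [he] at hxc; exact hxc
      rw [lNS, hemp] at hlT; simp at hlT
    · exact h
  obtain ⟨f, hfT, hmax⟩ := get_frob hT.2.2 hne
  have hfrobT : frobNS T = (f : ℤ) := frob_eq hfT hmax
  have hgt : ∀ y, f < y → y ∈ T := fun y hy => by
    by_contra hc; exact absurd (hmax y hc) (by omega)
  have hL : ∀ x, x ∈ LgapsNS T ↔ x ∉ T ∧ f - x ∉ T := mem_L_iff h0 hfT hmax
  have hLfin : (LgapsNS T).Finite := hT.2.2.subset (fun x hx => ((hL x).1 hx).1)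
  have hLlt : ∀ x ∈ LgapsNS T, 1 ≤ x ∧ x < f := by
    intro x hx
    obtain ⟨h1, h2⟩ := (hL x).1 hx
    have hxf : x ≤ f := hmax x h1
    have hx1 : 1 ≤ x := Nat.pos_of_ne_zero (fun he => h1 (he ▸ h0))
    have hxne : x ≠ f := fun he => h2 (by rw [he, Nat.sub_self]; exact h0)
    omega
  have hsymL : ∀ x ∈ LgapsNS T, f - x ∈ LgapsNS T := by
    intro x hx
    obtain ⟨h1, h2⟩ := (hL x).1 hx
    have hxf : x ≤ f := hmax x h1
    exact (hL _).2 ⟨h2, by rw [show f - (f - x) = x by omega]; exact h1⟩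
  set A := {x ∈ LgapsNS T | f < 2 * x} with hAdef
  set B := {x ∈ LgapsNS T | 2 * x < f} with hBdef
  set M := {x ∈ LgapsNS T | 2 * x = f} with hMdef
  have hAfin : A.Finite := hLfin.subset (fun x hx => hx.1)
  have hBfin : B.Finite := hLfin.subset (fun x hx => hx.1)
  have hMfin : M.Finite := hLfin.subset (fun x hx => hx.1)
  have hLeq : LgapsNS T = (A ∪ B) ∪ M := by
    ext x
    simp only [Set.mem_union, hAdef, hBdef, hMdef, Set.mem_setOf_eq, Set.mem_sep_iff]
    constructor
    · intro hx
      rcases lt_trichotomy (2 * x) f with h | h | h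
      · exact Or.inl (Or.inr ⟨hx, h⟩)
      · exact Or.inr ⟨hx, h⟩
      · exact Or.inl (Or.inl ⟨hx, h⟩)
    · rintro ((h | h) | h) <;> exact h.1
  have hBeq : B = (fun a => f - a) '' A := by
    ext b
    simp only [Set.mem_image, hAdef, hBdef, Set.mem_setOf_eq, Set.mem_sep_iff]
    constructor
    · intro ⟨hbL, hb2⟩
      obtain ⟨hb1, hbf⟩ := hLlt b hbL
      refine ⟨f - b, ⟨hsymL b hbL, by omega⟩, by omega⟩
    · rintro ⟨a, ⟨haL, ha2⟩, rfl⟩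
      obtain ⟨ha1, haf⟩ := hLlt a haL
      exact ⟨hsymL a haL, by omega⟩
  have hinj : Set.InjOn (fun a => f - a) A := by
    intro a ha b hb hab
    simp only at hab
    obtain ⟨_, haf⟩ := hLlt a ha.1
    obtain ⟨_, hbf⟩ := hLlt b hb.1
    omega
  have hdAB : Disjoint A B := by
    rw [Set.disjoint_left]
    rintro a ⟨_, ha⟩ ⟨_, hb⟩
    omega
  have hdM : Disjoint (A ∪ B) M := by
    rw [Set.disjoint_right]
    rintro x ⟨_, hx⟩ (⟨_, h⟩ | ⟨_, h⟩) <;> omega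
  have hcard : A.ncard + B.ncard + M.ncard = 2 * n + 1 := by
    rw [← hlT, lNS, hLeq, Set.ncard_union_eq hdM (hAfin.union hBfin) hMfin,
      Set.ncard_union_eq hdAB hAfin hBfin]
  have hBcard : B.ncard = A.ncard := by
    rw [hBeq, Set.ncard_image_of_injOn hinj]
  -- M is a subsingleton
  have hMsub : ∀ x ∈ M, ∀ y ∈ M, x = y := by
    rintro x ⟨_, hx⟩ y ⟨_, hy⟩; omega
  have hMne : M.Nonempty := by
    rcases Set.eq_empty_or_nonempty M with he | h
    · rw [he, Set.ncard_empty] at hcard; omega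
    · exact h
  obtain ⟨m, hmM⟩ := hMne
  have hMeq : M = {m} := Set.eq_singleton_iff_unique_mem.mpr ⟨hmM, fun y hy => hMsub y hy m hmM⟩
  have hm2 : 2 * m = f := hmM.2
  have hmL : m ∈ LgapsNS T := hmM.1
  have hAcard : A.ncard = n := by
    rw [hMeq, Set.ncard_singleton] at hcard; omega
  -- Properties of S = T ∪ A
  have hAT : ∀ a ∈ A, a ∉ T := fun a ha => ((hL a).1 ha.1).1
  have hAgap : ∀ a ∈ A, f - a ∉ T := fun a ha => ((hL a).1 ha.1).2
  have hfS : f ∉ T ∪ A := by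
    rintro (h | h)
    · exact hfT h
    · exact (hLlt f h.1).2.ne rfl
  have hmaxS : ∀ x, x ∉ T ∪ A → x ≤ f := fun x hx => hmax x (fun h => hx (Or.inl h))
  have hfrobS : frobNS (T ∪ A) = (f : ℤ) := frob_eq hfS hmaxS
  have hnsS : IsNumericalSemigroup (T ∪ A) := by
    refine ⟨Or.inl h0, ?_, hT.2.2.subset (fun x hx => by
      simp only [Set.mem_compl_iff, Set.mem_union, not_or] at hx ⊢; exact hx.1)⟩
    have hadd : ∀ b ∈ A, ∀ a ∈ T, a + b ∈ T ∪ A := by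
      intro b hbA a haT
      rcases Nat.eq_zero_or_pos a with rfl | ha1
      · simpa using Or.inr hbA
      obtain ⟨hb1, hbf⟩ := hLlt b hbA.1
      have hb2 : f < 2 * b := hbA.2
      by_cases hbig : f < a + b
      · exact Or.inl (hgt _ hbig)
      have habf : a + b ≠ f := by
        intro he
        exact hAgap b hbA (by rw [show f - b = a by omega]; exact haT)
      by_cases hcT : a + b ∈ T
      · exact Or.inl hcT
      · refine Or.inr ⟨(hL _).2 ⟨hcT, fun hy => ?_⟩, by omega⟩
        have : f - (a + b) + a ∈ T := hT.2.1 _ hy _ haT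
        rw [show f - (a + b) + a = f - b by omega] at this
        exact hAgap b hbA this
    rintro a (haT | haA) b (hbT | hbA)
    · exact Or.inl (hT.2.1 a haT b hbT)
    · exact hadd b hbA a haT
    · rw [add_comm]; exact hadd a haA b hbT
    · obtain ⟨_, haf⟩ := hLlt a haA.1
      exact Or.inl (hgt _ (by have h1 := haA.2; have h2 := hbA.2; omega))
  have hsymS : SymCond (T ∪ A) f := by
    intro x hx h2
    have hxT : x ∉ T := fun h => hx (Or.inl h)
    have hxA : x ∉ A := fun h => hx (Or.inr h)
    by_cases hxL : x ∈ LgapsNS T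
    · have hx2f : 2 * x < f := by
        rcases lt_trichotomy (2 * x) f with h | h | h
        · exact h
        · exact absurd h h2
        · exact absurd (⟨hxL, h⟩ : x ∈ A) hxA
      obtain ⟨hx1, hxf⟩ := hLlt x hxL
      exact Or.inr ⟨hsymL x hxL, by omega⟩
    · rw [hL] at hxL
      push_neg at hxL
      exact Or.inl (hxL hxT)
  -- Define S
  refine ⟨T ∪ A, A, ⟨irred_of_symcond hnsS hfS hmaxS hsymS, ?_⟩, ?_, ?_, hAcard, ?_⟩
  · rw [hfrobS]
    exact ⟨m, by push_cast; omega⟩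
  · rw [hfrobS, hfrobT]
  · intro a ha
    obtain ⟨h1, hf⟩ := hLlt a ha.1
    refine ⟨Or.inr ha, ?_, ?_⟩
    · rw [hfrobS]; exact_mod_cast ha.2
    · rw [hfrobS]; exact_mod_cast hf
  · ext x
    simp only [Set.mem_diff, Set.mem_union]
    constructor
    · intro hx
      exact ⟨Or.inl hx, fun hc => hAT x hc hx⟩
    · rintro ⟨hx | hx, hxA⟩
      · exact hx
      · exact absurd hx hxA

lemma part1 (n : ℕ) (S A : Set ℕ) (hpsym : IsPseudoSymmetricNS S)
    (hA : A ⊆ {x ∈ S | frobNS S < 2 * (x : ℤ) ∧ (x : ℤ) < frobNS S})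
    (hAcard : A.ncard = n) (hSA : IsNumericalSemigroup (S \ A)) :
    lNS (S \ A) = 2 * n + 1 := by
  have hns : IsNumericalSemigroup S := hpsym.1.1
  have heven := hpsym.2
  have h0 : 0 ∈ S := hns.1
  have hne : Sᶜ.Nonempty := by
    rcases Set.eq_empty_or_nonempty Sᶜ with he | h
    · rw [frob_of_compl_empty he] at heven
      norm_num at heven
    · exact h
  obtain ⟨f, hfS, hmax⟩ := get_frob hns.2.2 hne
  have hfrob : frobNS S = (f : ℤ) := frob_eq hfS hmax
  rw [hfrob] at heven
  have hfeven : Even f := by exact_mod_cast heven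
  obtain ⟨m, hm⟩ := hfeven
  have hsym : SymCond S f := symcond_of_psym hpsym hfS hmax
  have hA' : ∀ a ∈ A, a ∈ S ∧ f < 2 * a ∧ a < f := by
    intro a ha
    obtain ⟨h1, h2, h3⟩ := hA ha
    rw [hfrob] at h2 h3
    exact ⟨h1, by exact_mod_cast h2, by exact_mod_cast h3⟩
  have hsub : ∀ s ∈ S, s < f → f - s ∉ S := by
    intro s hs hlt hc
    have := hns.2.1 s hs _ hc
    rw [show s + (f - s) = f by omega] at this
    exact hfS this
  have h0T : (0 : ℕ) ∈ S \ A := ⟨h0, fun h => by have := (hA' 0 h).2.1; omega⟩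
  have hfT : f ∉ S \ A := fun h => hfS h.1
  have hmaxT : ∀ x, x ∉ S \ A → x ≤ f := by
    intro x hx
    rcases Classical.em (x ∈ S) with h | h
    · have hxA : x ∈ A := by
        by_contra hc
        exact hx ⟨h, hc⟩
      exact le_of_lt (hA' x hxA).2.2
    · exact hmax x h
  have hmS : m ∉ S := fun hc => hfS (by rw [hm]; exact hns.2.1 m hc m hc)
  have hkey : LgapsNS (S \ A) = (A ∪ (fun a => f - a) '' A) ∪ {m} := by
    ext x
    rw [mem_L_iff h0T hfT hmaxT]
    simp only [Set.mem_union, Set.mem_image, Set.mem_singleton_iff, Set.mem_diff]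
    constructor
    · rintro ⟨hx1, hx2⟩
      rcases Classical.em (x ∈ A) with hxA | hxA
      · exact Or.inl (Or.inl hxA)
      have hxS : x ∉ S := fun hc => hx1 ⟨hc, hxA⟩
      by_cases h2 : 2 * x = f
      · exact Or.inr (by omega)
      · have hfx : f - x ∈ S := hsym x hxS h2
        have hfxA : f - x ∈ A := by
          by_contra hc
          exact hx2 ⟨hfx, hc⟩
        refine Or.inl (Or.inr ⟨f - x, hfxA, ?_⟩)
        have := hmax x hxS
        omega
    · rintro ((hxA | ⟨a, haA, rfl⟩) | hxm)
      · obtain ⟨hxS, hx2, hx3⟩ := hA' x hxA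
        exact ⟨fun hc => hc.2 hxA, fun hc => hsub x hxS hx3 hc.1⟩
      · obtain ⟨haS, ha2, ha3⟩ := hA' a haA
        refine ⟨fun hc => hsub a haS ha3 hc.1, fun hc => ?_⟩
        rw [show f - (f - a) = a by omega] at hc
        exact hc.2 haA
      · refine ⟨fun hc => ?_, fun hc => ?_⟩
        · rw [hxm] at hc; exact hmS hc.1
        · rw [show f - x = m by omega] at hc; exact hmS hc.1
  have hAfin : A.Finite := (Set.finite_Iio f).subset (fun a ha => (hA' a ha).2.2)
  have hBfin : ((fun a => f - a) '' A).Finite := hAfin.image _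
  have hinj : Set.InjOn (fun a => f - a) A := by
    intro a ha b hb hab
    have h1 := (hA' a ha).2.2
    have h2 := (hA' b hb).2.2
    simp only at hab
    omega
  have hdAB : Disjoint A ((fun a => f - a) '' A) := by
    rw [Set.disjoint_left]
    rintro a ha ⟨b, hb, hab⟩
    simp only at hab
    have h1 := (hA' a ha).2.1
    have h2 := (hA' b hb).2.1
    have h3 := (hA' b hb).2.2
    omega
  have hdm : Disjoint (A ∪ (fun a => f - a) '' A) ({m} : Set ℕ) := by
    rw [Set.disjoint_singleton_right]
    rintro (hm1 | ⟨b, hb, hb2⟩)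
    · have := (hA' m hm1).2.1; omega
    · simp only at hb2
      have h2 := (hA' b hb).2.1
      have h3 := (hA' b hb).2.2
      omega
  rw [lNS, hkey, Set.ncard_union_eq hdm (hAfin.union hBfin) (Set.finite_singleton m),
    Set.ncard_union_eq hdAB hAfin hBfin, Set.ncard_image_of_injOn hinj,
    Set.ncard_singleton, hAcard]
  ring


/-- (1) If S is pseudo-symmetric and A ⊆ {x ∈ S : F(S)/2 < x < F(S)} has
cardinality n with S∖A a numerical semigroup, then l(S∖A) = 2n + 1. (2) Every numerical
semigroup T with l(T) = 2n + 1 arises this way (with F(S) = F(T)). -/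
theorem stmt14 (n : ℕ) :
    (∀ S A : Set ℕ, IsPseudoSymmetricNS S →
      A ⊆ {x ∈ S | frobNS S < 2 * (x : ℤ) ∧ (x : ℤ) < frobNS S} →
      A.ncard = n → IsNumericalSemigroup (S \ A) →
      lNS (S \ A) = 2 * n + 1) ∧
    (∀ T : Set ℕ, IsNumericalSemigroup T → lNS T = 2 * n + 1 →
      ∃ S A : Set ℕ, IsPseudoSymmetricNS S ∧ frobNS S = frobNS T ∧
        A ⊆ {x ∈ S | frobNS S < 2 * (x : ℤ) ∧ (x : ℤ) < frobNS S} ∧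
        A.ncard = n ∧ T = S \ A) := by
  exact ⟨fun S A h1 h2 h3 h4 => part1 n S A h1 h2 h3 h4, fun T h1 h2 => part2 n T h1 h2⟩
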